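/- Let n ≥ 1 be an integer and 1 < p < ∞. Let B ⊆ ℝⁿ be measurable with 0 < vol(B) < ∞, and let U ⊆ B be measurable with 0 < vol(U) ≤ vol(B)/2. Put a = vol(U)^{−1/p} and u = a·𝟙_U. Then for every measurable v : ℝⁿ → ℝ: (i) if v ≥ 1 almost everywhere on B, then ∫_B |v − u|^p ≥ vol(B)/2; (ii) if v ≤ a/2 almost everywhere on B, then ∫_B |v − u|^p ≥ 2^{−p}. Consequently, if ∫_B |v − u|^p < min(2^{−p}, vol(B)/2), then the sets {x ∈ B : v(x) < 1} and {x ∈ B : v(x) > a/2} both have positive Lebesgue measure. -/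

import Mathlib

open MeasureTheory

/-- **Quantitative `L^p` dichotomy for normalized bumps**: with `a = vol(U)^{-1/p}` and
`u = a·𝟙_U`, any measurable `v` with `v ≥ 1` a.e. on `B` has `∫_B |v-u|^p ≥ vol(B)/2`,
any `v ≤ a/2` a.e. on `B` has `∫_B |v-u|^p ≥ 2^{-p}`; hence any `v` with
`∫_B |v-u|^p < min(2^{-p}, vol(B)/2)` takes values `< 1` and `> a/2` on sets of
positive measure in `B`. -/
theorem lp_bump_dichotomy (n : ℕ) (hn : 1 ≤ n) (p : ℝ) (hp : 1 < p)
    (B U : Set (Fin n → ℝ)) (hBmeas : MeasurableSet B) (hUmeas : MeasurableSet U)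
    (hUB : U ⊆ B) (hB0 : 0 < volume B) (hBfin : volume B < ⊤)
    (hU0 : 0 < volume U) (hUhalf : volume U ≤ volume B / 2)
    (a : ℝ) (ha : a = (volume U).toReal ^ (-(1 / p)))
    (u : (Fin n → ℝ) → ℝ) (hu : u = U.indicator fun _ => a)
    (v : (Fin n → ℝ) → ℝ) (hv : Measurable v) :
    ((∀ᵐ x ∂volume.restrict B, 1 ≤ v x) →
      volume B / 2 ≤ ∫⁻ x in B, ENNReal.ofReal (|v x - u x| ^ p) ∂volume) ∧
    ((∀ᵐ x ∂volume.restrict B, v x ≤ a / 2) →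
      ENNReal.ofReal ((2 : ℝ) ^ (-p)) ≤ ∫⁻ x in B, ENNReal.ofReal (|v x - u x| ^ p) ∂volume) ∧
    ((∫⁻ x in B, ENNReal.ofReal (|v x - u x| ^ p) ∂volume <
        min (ENNReal.ofReal ((2 : ℝ) ^ (-p))) (volume B / 2)) →
      0 < volume {x ∈ B | v x < 1} ∧ 0 < volume {x ∈ B | a / 2 < v x}) := by
  have hp0 : (0:ℝ) < p := lt_trans one_pos hp
  have hBfin' : volume B ≠ ⊤ := hBfin.ne
  have hUfin : volume U ≠ ⊤ :=
    (lt_of_le_of_lt hUhalf (ENNReal.div_lt_top hBfin' (by norm_num))).ne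
  have htU : 0 < (volume U).toReal := ENNReal.toReal_pos hU0.ne' hUfin
  have ha' : 0 < a := ha ▸ Real.rpow_pos_of_pos htU _
  have hapow : a ^ p = (volume U).toReal⁻¹ := by
    rw [ha, ← Real.rpow_mul htU.le, show -(1 / p) * p = -1 by field_simp,
      Real.rpow_neg_one]
  have claim1 : (∀ᵐ x ∂volume.restrict B, 1 ≤ v x) →
      volume B / 2 ≤ ∫⁻ x in B, ENNReal.ofReal (|v x - u x| ^ p) ∂volume := by
    intro hvB
    have hsub : B \ U ⊆ B := Set.diff_subset
    have hmeasBU : MeasurableSet (B \ U) := hBmeas.diff hUmeas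
    have h1 : ∀ᵐ x ∂volume.restrict (B \ U), 1 ≤ ENNReal.ofReal (|v x - u x| ^ p) := by
      have hv' : ∀ᵐ x ∂volume.restrict (B \ U), 1 ≤ v x :=
        ae_restrict_of_ae_restrict_of_subset hsub hvB
      filter_upwards [hv', ae_restrict_mem hmeasBU] with x hx hxmem
      rw [hu, Set.indicator_of_notMem hxmem.2, ENNReal.one_le_ofReal]
      calc (1:ℝ) = 1 ^ p := (Real.one_rpow p).symm
        _ ≤ |v x - 0| ^ p := by
            apply Real.rpow_le_rpow zero_le_one _ hp0.le
            rw [sub_zero]; exact le_trans hx (le_abs_self _)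
    calc volume B / 2
        ≤ volume (B \ U) := by
          rw [measure_diff hUB hUmeas.nullMeasurableSet hUfin]
          calc volume B / 2 = volume B - volume B / 2 := (ENNReal.sub_half hBfin').symm
            _ ≤ volume B - volume U := tsub_le_tsub_left hUhalf _
      _ = ∫⁻ _ in B \ U, 1 ∂volume := (setLIntegral_one _).symm
      _ ≤ ∫⁻ x in B \ U, ENNReal.ofReal (|v x - u x| ^ p) ∂volume := lintegral_mono_ae h1
      _ ≤ ∫⁻ x in B, ENNReal.ofReal (|v x - u x| ^ p) ∂volume := lintegral_mono_set hsub
  have claim2 : (∀ᵐ x ∂volume.restrict B, v x ≤ a / 2) →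
      ENNReal.ofReal ((2 : ℝ) ^ (-p)) ≤ ∫⁻ x in B, ENNReal.ofReal (|v x - u x| ^ p) ∂volume := by
    intro hvB
    have hv' : ∀ᵐ x ∂volume.restrict U, v x ≤ a / 2 :=
      ae_restrict_of_ae_restrict_of_subset hUB hvB
    have h1 : ∀ᵐ x ∂volume.restrict U,
        ENNReal.ofReal ((a / 2) ^ p) ≤ ENNReal.ofReal (|v x - u x| ^ p) := by
      filter_upwards [hv', ae_restrict_mem hUmeas] with x hx hxmem
      apply ENNReal.ofReal_le_ofReal
      apply Real.rpow_le_rpow (by positivity) _ hp0.le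
      rw [hu, Set.indicator_of_mem hxmem]
      calc a / 2 ≤ a - v x := by linarith
        _ ≤ |a - v x| := le_abs_self _
        _ = |v x - a| := abs_sub_comm _ _
    have hval : (a / 2) ^ p = (volume U).toReal⁻¹ * (2:ℝ) ^ (-p) := by
      rw [Real.div_rpow ha'.le (by norm_num : (0:ℝ) ≤ 2), hapow,
        Real.rpow_neg (by norm_num : (0:ℝ) ≤ 2), div_eq_mul_inv]
    calc ENNReal.ofReal ((2 : ℝ) ^ (-p))
        = volume U * ENNReal.ofReal ((a / 2) ^ p) := by
          rw [hval, ENNReal.ofReal_mul (by positivity),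
            ENNReal.ofReal_inv_of_pos htU, ENNReal.ofReal_toReal hUfin, ← mul_assoc,
            ENNReal.mul_inv_cancel hU0.ne' hUfin, one_mul]
      _ = ∫⁻ _ in U, ENNReal.ofReal ((a / 2) ^ p) ∂volume := by
          rw [setLIntegral_const, mul_comm]
      _ ≤ ∫⁻ x in U, ENNReal.ofReal (|v x - u x| ^ p) ∂volume := lintegral_mono_ae h1
      _ ≤ ∫⁻ x in B, ENNReal.ofReal (|v x - u x| ^ p) ∂volume := lintegral_mono_set hUB
  refine ⟨claim1, claim2, ?_⟩
  intro hlt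
  constructor
  · by_contra h
    have h0 : volume {x ∈ B | v x < 1} = 0 := le_antisymm (not_lt.mp h) zero_le
    have hae0 : ∀ᵐ x ∂volume, x ∈ B → 1 ≤ v x := by
      rw [ae_iff]
      convert h0 using 2
      ext x
      simp [_root_.not_imp, not_le]
    have := claim1 ((ae_restrict_iff' hBmeas).mpr hae0)
    exact absurd this (not_le.mpr (lt_of_lt_of_le hlt (min_le_right _ _)))
  · by_contra h
    have h0 : volume {x ∈ B | a / 2 < v x} = 0 := le_antisymm (not_lt.mp h) zero_le
    have hae0 : ∀ᵐ x ∂volume, x ∈ B → v x ≤ a / 2 := by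
      rw [ae_iff]
      convert h0 using 2
      ext x
      simp [_root_.not_imp, not_le]
    have := claim2 ((ae_restrict_iff' hBmeas).mpr hae0)
    exact absurd this (not_le.mpr (lt_of_lt_of_le hlt (min_le_left _ _)))
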